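/- arXiv:2401.05027 — 3 statements merged into one kernel-verified Lean document; each statement's English description precedes it below -/
import Mathlib

section
/- Let α, β ∈ ℝ \ ℚ, 0 < γ < 1, 0 < ε < 1/2 and T > e. Assume that m_{ℝ²}({ (s,t) ∈ [0,T]² : there exists v ∈ ℤ³ \ {0} with ‖a_{s,t}·τ_{α,β}·v‖_∞ ≤ ε }) ≥ γ·T², where m_{ℝ²} is the Lebesgue measure on ℝ². Then ((log T)²/T²) · #{ n ∈ ℕ : n < e^{2T} and n·⟨nα⟩·⟨nβ⟩ ≤ ε³ } ≥ γ/18. -/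
open Filter MeasureTheory Matrix

/-- `⟨x⟩`: the distance from `x` to the nearest integer. -/
noncomputable def nearInt (x : ℝ) : ℝ := ⨅ m : ℤ, |x - (m : ℝ)|

/-- The matrix `a_{s,t} = diag(e^{-s-t}, e^s, e^t)`. -/
noncomputable def aMat (s t : ℝ) : Matrix (Fin 3) (Fin 3) ℝ :=
  Matrix.diagonal ![Real.exp (-s - t), Real.exp s, Real.exp t]

/-- `τ_{α,β}`: the lower triangular unipotent matrix with rows (1,0,0), (α,1,0), (β,0,1). -/
def tauMat (α β : ℝ) : Matrix (Fin 3) (Fin 3) ℝ :=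
  Matrix.of ![![1, 0, 0], ![α, 1, 0], ![β, 0, 1]]

section helpers
open Real Set

lemma nearInt_bddBelow (x : ℝ) : BddBelow (Set.range fun m : ℤ => |x - (m:ℝ)|) :=
  ⟨0, by rintro y ⟨m, rfl⟩; positivity⟩

lemma nearInt_le (x : ℝ) (m : ℤ) : nearInt x ≤ |x - m| := ciInf_le (nearInt_bddBelow x) m

lemma nearInt_eq_round (x : ℝ) : nearInt x = |x - round x| := by
  refine le_antisymm (nearInt_le x _) (le_ciInf fun m => ?_)
  rcases eq_or_ne m (round x) with rfl | h
  · exact le_rfl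
  · have h1 : |x - round x| ≤ 1/2 := abs_sub_round x
    have h2 : (1:ℝ) ≤ |(m:ℝ) - round x| := by
      calc (1:ℝ) ≤ |(m - round x : ℤ)| := by
            exact_mod_cast Int.one_le_abs (sub_ne_zero.2 h)
        _ = |(m:ℝ) - round x| := by push_cast; rfl
    have := abs_sub_abs_le_abs_sub ((m:ℝ) - round x) (x - round x)
    have h3 : |(m:ℝ) - round x - (x - round x)| = |x - m| := by
      rw [show (m:ℝ) - round x - (x - round x) = -(x - m) by ring, abs_neg]
    linarith

lemma nearInt_nonneg (x : ℝ) : 0 ≤ nearInt x := by rw [nearInt_eq_round]; positivity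

lemma nearInt_nat_mul_le (x : ℝ) (k : ℕ) : nearInt (k * x) ≤ k * nearInt x := by
  have := nearInt_le (k * x) (k * round x)
  rw [nearInt_eq_round x]
  calc nearInt (k*x) ≤ |(k:ℝ)*x - (k*round x : ℤ)| := this
    _ = k * |x - round x| := by push_cast; rw [← mul_sub, abs_mul, Nat.abs_cast]

lemma nearInt_pos_of_irrational {x : ℝ} (h : Irrational x) : 0 < nearInt x := by
  rw [nearInt_eq_round]
  have : x ≠ round x := fun hx => (h.ne_int (round x)) hx
  exact abs_pos.2 (sub_ne_zero.2 this)

lemma mulVec_eval (s t α β : ℝ) (w : Fin 3 → ℝ) :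
    (aMat s t * tauMat α β).mulVec w =
      ![Real.exp (-s-t) * w 0, Real.exp s * (α * w 0 + w 1), Real.exp t * (β * w 0 + w 2)] := by
  funext i
  fin_cases i <;>
    simp [aMat, tauMat, Matrix.mulVec, Matrix.mul_apply, dotProduct, Fin.sum_univ_three,
      Matrix.diagonal] <;> ring

lemma tri_vol (A b c K : ℝ) (hK : 0 ≤ K) (hD : b + c - A ≤ K) :
    volume {p : ℝ × ℝ | p.1 ∈ Icc (A - c) b ∧ p.2 ∈ Icc (A - p.1) c} ≤
      ENNReal.ofReal (K ^ 2 / 2) := by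
  set a : ℝ := A - c with ha
  rcases lt_or_ge b a with hba | hab
  · have : {p : ℝ × ℝ | p.1 ∈ Icc a b ∧ p.2 ∈ Icc (A - p.1) c} = ∅ := by
      ext p; simp only [mem_setOf_eq, mem_Icc, mem_empty_iff_false, iff_false]
      rintro ⟨⟨h1, h2⟩, _⟩; linarith
    rw [this]; simp
  · have hS : MeasurableSet {p : ℝ × ℝ | p.1 ∈ Icc a b ∧ p.2 ∈ Icc (A - p.1) c} := by
      apply MeasurableSet.inter
      · exact (measurableSet_Icc).preimage measurable_fst
      · apply MeasurableSet.inter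
        · exact measurableSet_le (measurable_const.sub measurable_fst) measurable_snd
        · exact measurableSet_le measurable_snd measurable_const
    rw [show (volume : Measure (ℝ × ℝ)) = (volume : Measure ℝ).prod volume from
      Measure.volume_eq_prod _ _]
    rw [Measure.prod_apply hS]
    have hslice : ∀ x : ℝ, (Prod.mk x ⁻¹' {p : ℝ × ℝ | p.1 ∈ Icc a b ∧ p.2 ∈ Icc (A - p.1) c})
        = if x ∈ Icc a b then Icc (A - x) c else ∅ := by
      intro x
      by_cases hx : x ∈ Icc a b
      · rw [if_pos hx]; ext y; rw [mem_Icc] at hx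
        simp only [mem_preimage, mem_setOf_eq, mem_Icc, hx.1, hx.2, true_and, and_true]
      · rw [if_neg hx]; ext y
        simp only [mem_preimage, mem_setOf_eq, mem_Icc, mem_empty_iff_false, iff_false]
        tauto
    calc ∫⁻ x, volume (Prod.mk x ⁻¹' {p : ℝ × ℝ | p.1 ∈ Icc a b ∧ p.2 ∈ Icc (A - p.1) c})
        = ∫⁻ x in Icc a b, ENNReal.ofReal (c - (A - x)) := by
          rw [← lintegral_indicator measurableSet_Icc]
          congr 1; funext x
          by_cases hx : x ∈ Icc a b
          · rw [hslice x, if_pos hx, Set.indicator_of_mem hx, Real.volume_Icc]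
          · rw [hslice x, if_neg hx, Set.indicator_of_notMem hx, measure_empty]
      _ = ENNReal.ofReal (∫ x in Icc a b, (c - (A - x))) := by
          rw [← ofReal_integral_eq_lintegral_ofReal]
          · exact (Continuous.integrableOn_Icc (by continuity))
          · refine (ae_restrict_iff' measurableSet_Icc).2 (Filter.Eventually.of_forall ?_)
            intro x hx; simp only [Pi.zero_apply]; rw [mem_Icc] at hx
            simp only [ha] at hx; linarith [hx.1]
      _ ≤ ENNReal.ofReal (K^2/2) := by
          apply ENNReal.ofReal_le_ofReal
          rw [MeasureTheory.integral_Icc_eq_integral_Ioc, ← intervalIntegral.integral_of_le hab]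
          have hval : ∫ x in a..b, (c - (A - x)) = (c - A) * (b - a) + (b^2 - a^2)/2 := by
            rw [show (fun x => c - (A - x)) = (fun x => (c - A) + x) from funext fun x => by ring]
            rw [intervalIntegral.integral_add (intervalIntegrable_const)
              intervalIntegral.intervalIntegrable_id]
            rw [intervalIntegral.integral_const, integral_id]
            simp [smul_eq_mul]; ring
          rw [hval, ha]
          nlinarith [sq_nonneg (b + c - A), sq_nonneg (b + c - A + K)]

lemma extract (α β ε s t : ℝ) (hε0 : 0 < ε) (hε1 : ε < 1/2)
    (hs : 0 ≤ s) (ht : 0 ≤ t) (v : Fin 3 → ℤ) (hv : v ≠ 0)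
    (hnorm : ‖(aMat s t * tauMat α β).mulVec (fun i => (v i : ℝ))‖ ≤ ε) :
    ∃ n : ℕ, 0 < n ∧ (n : ℝ) ≤ ε * exp (s + t) ∧
      exp s * nearInt (n * α) ≤ ε ∧ exp t * nearInt (n * β) ≤ ε := by
  rw [mulVec_eval] at hnorm
  have hi := (pi_norm_le_iff_of_nonneg hε0.le).1 hnorm
  have h0 : exp (-s-t) * |(v 0 : ℝ)| ≤ ε := by simpa [Real.norm_eq_abs] using hi 0
  have h1 : exp s * |α * (v 0 : ℝ) + (v 1 : ℝ)| ≤ ε := by simpa [Real.norm_eq_abs] using hi 1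
  have h2 : exp t * |β * (v 0 : ℝ) + (v 2 : ℝ)| ≤ ε := by simpa [Real.norm_eq_abs] using hi 2
  have hv0 : v 0 ≠ 0 := by
    intro h00
    have hz : ∀ i : Fin 3, (i = 1 ∨ i = 2) → v i = 0 := by
      rintro i (rfl | rfl)
      · have : |(v 1 : ℝ)| ≤ ε := by
          have hes : 1 ≤ exp s := Real.one_le_exp hs
          have := h1
          rw [h00] at this
          simp only [Int.cast_zero, mul_zero, zero_add] at this
          nlinarith [abs_nonneg ((v 1 : ℝ))]
        have h1' : |v 1| < 1 := by
          have : |(v 1 : ℝ)| < 1 := lt_of_le_of_lt this (by linarith)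
          exact_mod_cast (by push_cast; simpa using this : (|v 1| : ℝ) < 1)
        exact Int.abs_lt_one_iff.1 h1'
      · have : |(v 2 : ℝ)| ≤ ε := by
          have het : 1 ≤ exp t := Real.one_le_exp ht
          have := h2
          rw [h00] at this
          simp only [Int.cast_zero, mul_zero, zero_add] at this
          nlinarith [abs_nonneg ((v 2 : ℝ))]
        have h2' : |v 2| < 1 := by
          have : |(v 2 : ℝ)| < 1 := lt_of_le_of_lt this (by linarith)
          exact_mod_cast (by push_cast; simpa using this : (|v 2| : ℝ) < 1)
        exact Int.abs_lt_one_iff.1 h2'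
    apply hv
    funext i
    fin_cases i
    · exact h00
    · exact hz 1 (Or.inl rfl)
    · exact hz 2 (Or.inr rfl)
  set n : ℕ := (v 0).natAbs with hn
  have hn0 : 0 < n := Int.natAbs_pos.2 hv0
  have hcast : (n : ℝ) = |((v 0 : ℤ) : ℝ)| := by
    rw [hn, Nat.cast_natAbs]; push_cast; ring
  refine ⟨n, hn0, ?_, ?_, ?_⟩
  · have hmul : exp (s+t) * exp (-s-t) = 1 := by
      rw [← exp_add]; ring_nf; exact exp_zero
    have hep : 0 < exp (s+t) := exp_pos _
    rw [hcast]
    nlinarith [abs_nonneg ((v 0 : ℤ) : ℝ)]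
  · have hni : nearInt (n * α) ≤ |α * (v 0 : ℝ) + (v 1 : ℝ)| := by
      rcases lt_or_gt_of_ne hv0 with hneg | hpos
      · have hC : (n:ℝ) = -((v 0 : ℤ):ℝ) := by
          rw [hcast, abs_of_neg]; exact_mod_cast hneg
        calc nearInt ((n:ℝ) * α) ≤ |(n:ℝ) * α - ((v 1 : ℤ):ℝ)| := nearInt_le _ (v 1)
          _ = |α * (v 0 : ℝ) + (v 1 : ℝ)| := by
              rw [hC, show (-((v 0:ℤ):ℝ)) * α - ((v 1:ℤ):ℝ) = -(α * (v 0:ℝ) + (v 1:ℝ)) by ring,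
                abs_neg]
      · have hC : (n:ℝ) = ((v 0 : ℤ):ℝ) := by
          rw [hcast, abs_of_pos]; exact_mod_cast hpos
        calc nearInt ((n:ℝ) * α) ≤ |(n:ℝ) * α - ((-(v 1) : ℤ):ℝ)| := nearInt_le _ (-(v 1))
          _ = |α * (v 0 : ℝ) + (v 1 : ℝ)| := by
              rw [hC]; push_cast; ring_nf
    calc exp s * nearInt (n * α) ≤ exp s * |α * (v 0 : ℝ) + (v 1 : ℝ)| :=
          mul_le_mul_of_nonneg_left hni (exp_pos s).le
      _ ≤ ε := h1
  · have hni : nearInt (n * β) ≤ |β * (v 0 : ℝ) + (v 2 : ℝ)| := by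
      rcases lt_or_gt_of_ne hv0 with hneg | hpos
      · have hC : (n:ℝ) = -((v 0 : ℤ):ℝ) := by
          rw [hcast, abs_of_neg]; exact_mod_cast hneg
        calc nearInt ((n:ℝ) * β) ≤ |(n:ℝ) * β - ((v 2 : ℤ):ℝ)| := nearInt_le _ (v 2)
          _ = |β * (v 0 : ℝ) + (v 2 : ℝ)| := by
              rw [hC, show (-((v 0:ℤ):ℝ)) * β - ((v 2:ℤ):ℝ) = -(β * (v 0:ℝ) + (v 2:ℝ)) by ring,
                abs_neg]
      · have hC : (n:ℝ) = ((v 0 : ℤ):ℝ) := by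
          rw [hcast, abs_of_pos]; exact_mod_cast hpos
        calc nearInt ((n:ℝ) * β) ≤ |(n:ℝ) * β - ((-(v 2) : ℤ):ℝ)| := nearInt_le _ (-(v 2))
          _ = |β * (v 0 : ℝ) + (v 2 : ℝ)| := by
              rw [hC]; push_cast; ring_nf
    calc exp t * nearInt (n * β) ≤ exp t * |β * (v 0 : ℝ) + (v 2 : ℝ)| :=
          mul_le_mul_of_nonneg_left hni (exp_pos t).le
      _ ≤ ε := h2

end helpers
set_option maxHeartbeats 1000000 in
theorem stmt7 (α β : ℝ) (hα : Irrational α) (hβ : Irrational β)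
    (γ : ℝ) (hγ0 : 0 < γ) (hγ1 : γ < 1) (ε : ℝ) (hε0 : 0 < ε) (hε1 : ε < 1 / 2)
    (T : ℝ) (hT : Real.exp 1 < T)
    (hmass : ENNReal.ofReal (γ * T ^ 2) ≤
      volume {p : ℝ × ℝ | p.1 ∈ Set.Icc 0 T ∧ p.2 ∈ Set.Icc 0 T ∧
        ∃ v : Fin 3 → ℤ, v ≠ 0 ∧
          ‖(aMat p.1 p.2 * tauMat α β).mulVec (fun i => (v i : ℝ))‖ ≤ ε}) :
    γ / 18 ≤
      (Real.log T) ^ 2 / T ^ 2 *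
        ({n : ℕ | 0 < n ∧ (n : ℝ) < Real.exp (2 * T) ∧
          (n : ℝ) * nearInt (n * α) * nearInt (n * β) ≤ ε ^ 3}.ncard : ℝ) := by
  have hT0 : (0:ℝ) < T := lt_trans (Real.exp_pos 1) hT
  have hL1 : 1 < Real.log T := (Real.lt_log_iff_exp_lt hT0).2 hT
  have hT27 : (2.7:ℝ) < T := lt_trans (by nlinarith [Real.exp_one_gt_d9]) hT
  set L : ℝ := Real.log T with hL
  set N : Set ℕ := {n : ℕ | 0 < n ∧ (n : ℝ) < Real.exp (2 * T) ∧
      (n : ℝ) * nearInt (n * α) * nearInt (n * β) ≤ ε ^ 3} with hNdef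
  have hNfin : N.Finite := by
    apply Set.Finite.subset (Set.finite_Iio (Nat.ceil (Real.exp (2*T))))
    intro n hn
    exact Nat.lt_ceil.2 hn.2.1
  have hpa : ∀ n : ℕ, 0 < n → 0 < nearInt (n * α) := fun n hn =>
    nearInt_pos_of_irrational (hα.natCast_mul (Nat.pos_iff_ne_zero.1 hn))
  have hpb : ∀ n : ℕ, 0 < n → 0 < nearInt (n * β) := fun n hn =>
    nearInt_pos_of_irrational (hβ.natCast_mul (Nat.pos_iff_ne_zero.1 hn))
  have hmemN : ∀ n : ℕ, (0 < n ∧ (n : ℝ) < Real.exp (2 * T) ∧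
      (n : ℝ) * nearInt (n * α) * nearInt (n * β) ≤ ε ^ 3) ↔ n ∈ N := fun n => Iff.rfl
  clear_value N
  by_cases hbig : ∃ n : ℕ, 0 < n ∧ 6 * L ≤
      min (Real.log ε - Real.log (nearInt (n*α))) T +
      min (Real.log ε - Real.log (nearInt (n*β))) T - (Real.log n - Real.log ε)
  · -- Case (b): some n has a huge region; its multiples fill up N.
    obtain ⟨n, hn0, hD⟩ := hbig
    set a1 : ℝ := nearInt (n*α) with ha1
    set a2 : ℝ := nearInt (n*β) with ha2
    have ha1p : 0 < a1 := hpa n hn0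
    have ha2p : 0 < a2 := hpb n hn0
    have hnR : (0:ℝ) < (n:ℝ) := by exact_mod_cast hn0
    -- product bound  n a1 a2 ≤ ε³ / T⁶
    have hlog : Real.log n + Real.log a1 + Real.log a2 ≤ 3*Real.log ε - 6*L := by
      have m1 := min_le_left (Real.log ε - Real.log a1) T
      have m2 := min_le_left (Real.log ε - Real.log a2) T
      linarith
    have hT6 : Real.exp (6*L) = T^6 := by
      rw [hL, show (6:ℝ)*Real.log T = ((6:ℕ):ℝ)*Real.log T by norm_num,
        Real.exp_nat_mul, Real.exp_log hT0]
    have hE3 : Real.exp (3*Real.log ε) = ε^3 := by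
      rw [show (3:ℝ)*Real.log ε = ((3:ℕ):ℝ)*Real.log ε by norm_num,
        Real.exp_nat_mul, Real.exp_log hε0]
    have hprod : (n:ℝ) * a1 * a2 ≤ ε^3 / T^6 := by
      have := Real.exp_le_exp.2 hlog
      rw [Real.exp_add, Real.exp_add, Real.exp_log hnR, Real.exp_log ha1p,
        Real.exp_log ha2p, Real.exp_sub, hT6, hE3] at this
      exact this
    -- size bound  n ≤ ε e^{2T} / T⁶
    have hlogn : Real.log n ≤ Real.log ε + 2*T - 6*L := by
      have m1 := min_le_right (Real.log ε - Real.log a1) T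
      have m2 := min_le_right (Real.log ε - Real.log a2) T
      linarith
    have hnle : (n:ℝ) ≤ ε * Real.exp (2*T) / T^6 := by
      have := Real.exp_le_exp.2 hlogn
      rw [Real.exp_log hnR, Real.exp_sub, Real.exp_add, Real.exp_log hε0, hT6] at this
      exact this
    set m : ℕ := ⌊T^2⌋₊ with hm
    have hkey : ∀ k ∈ Finset.Icc 1 m, k * n ∈ N := by
      intro k hk
      rw [Finset.mem_Icc] at hk
      have hk1 : 1 ≤ k := hk.1
      have hkR : (k:ℝ) ≤ T^2 := le_trans (Nat.cast_le.2 hk.2) (Nat.floor_le (by positivity))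
      have hkR0 : (1:ℝ) ≤ (k:ℝ) := by exact_mod_cast hk1
      have hT2 : (1:ℝ) < T^2 := by nlinarith
      have hT6p : (0:ℝ) < T^6 := by positivity
      rw [← hmemN]
      refine ⟨Nat.mul_pos hk1 hn0, ?_, ?_⟩
      · -- k n < e^{2T}
        push_cast
        have h1 : (k:ℝ) * n ≤ T^2 * (ε * Real.exp (2*T) / T^6) := by
          apply mul_le_mul hkR hnle hnR.le (by positivity)
        have h2 : T^2 * (ε * Real.exp (2*T) / T^6) = ε * Real.exp (2*T) / T^4 := by
          field_simp
        have h3 : ε * Real.exp (2*T) / T^4 < Real.exp (2*T) := by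
          rw [div_lt_iff₀ (by positivity)]
          nlinarith [Real.exp_pos (2*T), sq_nonneg (T^2-1)]
        linarith
      · -- (kn)⟨knα⟩⟨knβ⟩ ≤ ε³
        have hca : ((k*n : ℕ):ℝ) * α = (k:ℝ) * ((n:ℝ) * α) := by push_cast; ring
        have hcb : ((k*n : ℕ):ℝ) * β = (k:ℝ) * ((n:ℝ) * β) := by push_cast; ring
        have hka : nearInt ((k*n : ℕ) * α) ≤ k * a1 := by
          rw [hca]; exact nearInt_nat_mul_le ((n:ℝ)*α) k
        have hkb : nearInt ((k*n : ℕ) * β) ≤ k * a2 := by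
          rw [hcb]; exact nearInt_nat_mul_le ((n:ℝ)*β) k
        have hkn : ((k*n : ℕ):ℝ) = (k:ℝ) * n := by push_cast; ring
        calc ((k*n : ℕ):ℝ) * nearInt ((k*n : ℕ) * α) * nearInt ((k*n : ℕ) * β)
            ≤ ((k:ℝ) * n) * ((k:ℝ) * a1) * ((k:ℝ) * a2) := by
              apply mul_le_mul
              · apply mul_le_mul (le_of_eq hkn) hka (nearInt_nonneg _) (by positivity)
              · exact hkb
              · exact nearInt_nonneg _
              · positivity
          _ = (k:ℝ)^3 * ((n:ℝ) * a1 * a2) := by ring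
          _ ≤ (T^2)^3 * (ε^3 / T^6) := by
              have hk3 : (k:ℝ)^3 ≤ (T^2)^3 := pow_le_pow_left₀ (by positivity) hkR 3
              exact mul_le_mul hk3 hprod
                (mul_nonneg (mul_nonneg hnR.le ha1p.le) ha2p.le) (by positivity)
          _ = ε^3 := by field_simp
    -- so N has at least m elements
    have hcard : m ≤ N.ncard := by
      have hsub : (((Finset.Icc 1 m).image (fun k => k * n)) : Set ℕ) ⊆ N := by
        intro x hx
        simp only [Finset.coe_image, Set.mem_image, Finset.mem_coe] at hx
        obtain ⟨k, hk, rfl⟩ := hx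
        exact hkey k hk
      have h1 := Set.ncard_le_ncard hsub hNfin
      rwa [Set.ncard_coe_finset,
        Finset.card_image_of_injective _ (mul_left_injective₀ hn0.ne'), Nat.card_Icc,
        Nat.add_sub_cancel] at h1
    have hmR : (T^2 - 1 : ℝ) ≤ (N.ncard : ℝ) := by
      have h1 : (T^2 - 1 : ℝ) < (m:ℝ) := Nat.sub_one_lt_floor (T^2)
      have h2 : ((m:ℕ):ℝ) ≤ (N.ncard : ℝ) := Nat.cast_le.2 hcard
      linarith
    have harith : ∀ c : ℝ, T^2 - 1 ≤ c → γ/18 ≤ L^2/T^2 * c := by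
      intro c hc
      have h2 : (0:ℝ) < T^2 := by positivity
      have hc0 : (0:ℝ) ≤ c := by nlinarith
      have h3 : γ/18 ≤ (T^2-1)/T^2 := by
        rw [div_le_div_iff₀ (by norm_num) h2]
        nlinarith
      have h4 : (T^2-1)/T^2 ≤ c/T^2 := by gcongr
      have h5 : c/T^2 ≤ L^2/T^2*c := by
        have he : L^2/T^2*c = c/T^2*L^2 := by ring
        have hL2 : (1:ℝ) ≤ L^2 := by nlinarith
        have h6 := mul_le_mul_of_nonneg_left hL2 (div_nonneg hc0 h2.le)
        rw [mul_one] at h6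
        rw [he]
        linarith
      linarith
    exact harith _ hmR
  · -- Case (a): all regions are small triangles.
    push_neg at hbig
    set A : ℕ → ℝ := fun n => Real.log n - Real.log ε with hA
    set Bm : ℕ → ℝ := fun n => min (Real.log ε - Real.log (nearInt (n*α))) T with hBm
    set Cm : ℕ → ℝ := fun n => min (Real.log ε - Real.log (nearInt (n*β))) T with hCm
    set S : ℕ → Set (ℝ × ℝ) :=
      fun n => {p : ℝ × ℝ | p.1 ∈ Set.Icc (A n - Cm n) (Bm n) ∧ p.2 ∈ Set.Icc (A n - p.1) (Cm n)}
      with hS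
    set F : Finset ℕ := hNfin.toFinset with hF
    have hcover : {p : ℝ × ℝ | p.1 ∈ Set.Icc 0 T ∧ p.2 ∈ Set.Icc 0 T ∧
        ∃ v : Fin 3 → ℤ, v ≠ 0 ∧
          ‖(aMat p.1 p.2 * tauMat α β).mulVec (fun i => (v i : ℝ))‖ ≤ ε} ⊆
        ⋃ n ∈ F, S n := by
      rintro p ⟨hs, ht, v, hv, hnorm⟩
      rw [Set.mem_Icc] at hs ht
      obtain ⟨n, hn0, hle, hA1, hA2⟩ :=
        extract α β ε p.1 p.2 hε0 hε1 hs.1 ht.1 v hv hnorm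
      have ha1p : 0 < nearInt (n*α) := hpa n hn0
      have ha2p : 0 < nearInt (n*β) := hpb n hn0
      have hnR : (0:ℝ) < (n:ℝ) := by exact_mod_cast hn0
      have hexp1 : Real.exp p.1 ≤ ε / nearInt (n*α) := by
        rw [le_div_iff₀ ha1p]; exact hA1
      have hexp2 : Real.exp p.2 ≤ ε / nearInt (n*β) := by
        rw [le_div_iff₀ ha2p]; exact hA2
      have hs1 : p.1 ≤ Real.log ε - Real.log (nearInt (n*α)) := by
        rw [← Real.log_div hε0.ne' ha1p.ne']
        exact (Real.le_log_iff_exp_le (by positivity)).2 hexp1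
      have hs2 : p.2 ≤ Real.log ε - Real.log (nearInt (n*β)) := by
        rw [← Real.log_div hε0.ne' ha2p.ne']
        exact (Real.le_log_iff_exp_le (by positivity)).2 hexp2
      have hAst : A n ≤ p.1 + p.2 := by
        rw [hA]
        simp only
        rw [← Real.log_div hnR.ne' hε0.ne']
        apply (Real.log_le_iff_le_exp (by positivity)).2
        rw [div_le_iff₀ hε0]
        rw [mul_comm]
        exact hle
      have hnN : n ∈ N := by
        rw [← hmemN]
        refine ⟨hn0, ?_, ?_⟩
        · have : Real.exp (p.1 + p.2) ≤ Real.exp (2*T) :=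
            Real.exp_le_exp.2 (by linarith [hs.2, ht.2])
          nlinarith [Real.exp_pos (2*T)]
        · have hfac : (n:ℝ) * nearInt (n*α) * nearInt (n*β) ≤
              (ε * Real.exp (p.1 + p.2)) * (ε / Real.exp p.1) * (ε / Real.exp p.2) := by
            have e1 : nearInt (n*α) ≤ ε / Real.exp p.1 := by
              rw [le_div_iff₀ (Real.exp_pos _)]; rw [mul_comm]; exact hA1
            have e2 : nearInt (n*β) ≤ ε / Real.exp p.2 := by
              rw [le_div_iff₀ (Real.exp_pos _)]; rw [mul_comm]; exact hA2
            apply mul_le_mul _ e2 (nearInt_nonneg _) (by positivity)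
            apply mul_le_mul hle e1 (nearInt_nonneg _) (by positivity)
          have hfac2 : (ε * Real.exp (p.1 + p.2)) * (ε / Real.exp p.1) * (ε / Real.exp p.2)
              = ε^3 := by
            rw [Real.exp_add]
            field_simp
          linarith
      have hnF : n ∈ F := by rwa [hF, Set.Finite.mem_toFinset]
      apply Set.mem_biUnion hnF
      refine ⟨Set.mem_Icc.2 ⟨?_, le_min hs1 hs.2⟩, Set.mem_Icc.2 ⟨?_, le_min hs2 ht.2⟩⟩
      · have : p.2 ≤ Cm n := le_min hs2 ht.2
        simp only [hA, hCm] at *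
        linarith
      · simp only [hA] at *
        linarith
    have hvol : ∀ n ∈ F, volume (S n) ≤ ENNReal.ofReal ((6*L)^2/2) := by
      intro n hnF
      have hnN : n ∈ N := by rwa [hF, Set.Finite.mem_toFinset] at hnF
      rw [← hmemN] at hnN
      have hD := hbig n hnN.1
      exact tri_vol (A n) (Bm n) (Cm n) (6*L) (by nlinarith) (le_of_lt hD)
    have hchain : ENNReal.ofReal (γ * T^2) ≤ (F.card : ENNReal) * ENNReal.ofReal ((6*L)^2/2) := by
      calc ENNReal.ofReal (γ * T^2) ≤ volume {p : ℝ × ℝ | p.1 ∈ Set.Icc 0 T ∧ p.2 ∈ Set.Icc 0 T ∧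
            ∃ v : Fin 3 → ℤ, v ≠ 0 ∧
              ‖(aMat p.1 p.2 * tauMat α β).mulVec (fun i => (v i : ℝ))‖ ≤ ε} := hmass
        _ ≤ volume (⋃ n ∈ F, S n) := measure_mono hcover
        _ ≤ ∑ n ∈ F, volume (S n) := measure_biUnion_finset_le F S
        _ ≤ ∑ n ∈ F, ENNReal.ofReal ((6*L)^2/2) := Finset.sum_le_sum hvol
        _ = (F.card : ENNReal) * ENNReal.ofReal ((6*L)^2/2) := by
            rw [Finset.sum_const, nsmul_eq_mul]
    have hcardN : F.card = N.ncard := by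
      rw [hF, Set.ncard_eq_toFinset_card N hNfin]
    have hreal : γ * T^2 ≤ (N.ncard : ℝ) * ((6*L)^2/2) := by
      have h1 : ENNReal.ofReal (γ * T^2) ≤ ENNReal.ofReal ((N.ncard : ℝ) * ((6*L)^2/2)) := by
        calc ENNReal.ofReal (γ * T^2) ≤ (F.card : ENNReal) * ENNReal.ofReal ((6*L)^2/2) := hchain
          _ = ENNReal.ofReal ((N.ncard : ℝ)) * ENNReal.ofReal ((6*L)^2/2) := by
              rw [hcardN, ENNReal.ofReal_natCast]
          _ = ENNReal.ofReal ((N.ncard : ℝ) * ((6*L)^2/2)) :=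
              (ENNReal.ofReal_mul (by positivity)).symm
      rwa [ENNReal.ofReal_le_ofReal_iff (by positivity)] at h1
    have hTT : (0:ℝ) < T^2 := by positivity
    rw [show L^2/T^2 * ((N.ncard : ℝ)) = (L^2 * (N.ncard : ℝ))/T^2 by ring,
      div_le_div_iff₀ (by norm_num : (0:ℝ) < 18) hTT]
    nlinarith
end

section
/- Let 0 < ε < 1 and T > 1. The sets a_{m,n}^{−1}·Δ_ε, for (m,n) ranging over ℤ_{≥0}², are pairwise disjoint, and the union of a_{m,n}^{−1}·Δ_ε over all integers m, n with 0 ≤ m, n ≤ ⌊T⌋ is contained in Ω_{T,ε}. -/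
open Filter MeasureTheory Matrix

/-- `Ω_{T,ε} = {(y,x₁,x₂) : 0 < y < e^{2T}, 0 < |x₁| < 1/2, 0 < |x₂| < 1/2, y|x₁||x₂| < ε}`. -/
def Omega (T ε : ℝ) : Set (Fin 3 → ℝ) :=
  {w | 0 < w 0 ∧ w 0 < Real.exp (2 * T) ∧ 0 < |w 1| ∧ |w 1| < 1 / 2 ∧
    0 < |w 2| ∧ |w 2| < 1 / 2 ∧ w 0 * |w 1| * |w 2| < ε}

/-- `Δ_ε = {(y,x₁,x₂) : 0 < y < 1, 1/(2e) < |x₁| < 1/2, 1/(2e) < |x₂| < 1/2, y|x₁||x₂| < ε}`. -/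
noncomputable def Delta (ε : ℝ) : Set (Fin 3 → ℝ) :=
  {w | 0 < w 0 ∧ w 0 < 1 ∧ 1 / (2 * Real.exp 1) < |w 1| ∧ |w 1| < 1 / 2 ∧
    1 / (2 * Real.exp 1) < |w 2| ∧ |w 2| < 1 / 2 ∧ w 0 * |w 1| * |w 2| < ε}

lemma aInv_mulVec (s t : ℝ) (w : Fin 3 → ℝ) :
    (aMat s t)⁻¹.mulVec w = ![Real.exp (s+t) * w 0, Real.exp (-s) * w 1, Real.exp (-t) * w 2] := by
  have hinv : (aMat s t)⁻¹ = Matrix.diagonal ![Real.exp (s+t), Real.exp (-s), Real.exp (-t)] := by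
    apply Matrix.inv_eq_right_inv
    rw [aMat, Matrix.diagonal_mul_diagonal]
    ext i j
    fin_cases i <;> fin_cases j <;>
      simp [Matrix.diagonal, ← Real.exp_add] <;> ring_nf
  rw [hinv]
  ext i
  fin_cases i <;> simp [Matrix.mulVec_diagonal]

lemma image_bound (s t ε : ℝ) (v : Fin 3 → ℝ)
    (hv : v ∈ (fun w => (aMat s t)⁻¹.mulVec w) '' Delta ε) :
    0 < v 0 ∧ v 0 < Real.exp (s+t) ∧
    Real.exp (-s) / (2 * Real.exp 1) < |v 1| ∧ |v 1| < Real.exp (-s) / 2 ∧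
    Real.exp (-t) / (2 * Real.exp 1) < |v 2| ∧ |v 2| < Real.exp (-t) / 2 ∧
    v 0 * |v 1| * |v 2| < ε := by
  obtain ⟨w, ⟨h0, h1, h2, h3, h4, h5, h6⟩, rfl⟩ := hv
  simp only []
  rw [aInv_mulVec]
  have e0 : (0:ℝ) < Real.exp (s+t) := Real.exp_pos _
  have es : (0:ℝ) < Real.exp (-s) := Real.exp_pos _
  have et : (0:ℝ) < Real.exp (-t) := Real.exp_pos _
  simp only [Matrix.cons_val_zero, Matrix.cons_val_one, Matrix.head_cons,
    Matrix.cons_val_two, Matrix.tail_cons, abs_mul, abs_of_pos es, abs_of_pos et]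
  refine ⟨by positivity, ?_, ?_, ?_, ?_, ?_, ?_⟩
  · exact (mul_lt_iff_lt_one_right e0).2 h1
  · rw [div_lt_iff₀ (by positivity)] at h2 ⊢; nlinarith
  · rw [lt_div_iff₀ (by norm_num)] at h3 ⊢; nlinarith
  · rw [div_lt_iff₀ (by positivity)] at h4 ⊢; nlinarith
  · rw [lt_div_iff₀ (by norm_num)] at h5 ⊢; nlinarith
  · have : Real.exp (s+t) * w 0 * (Real.exp (-s) * |w 1|) * (Real.exp (-t) * |w 2|)
        = (Real.exp (s+t) * Real.exp (-s) * Real.exp (-t)) * (w 0 * |w 1| * |w 2|) := by ring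
    rw [this, ← Real.exp_add, ← Real.exp_add]
    have : s + t + -s + -t = 0 := by ring
    rw [this, Real.exp_zero, one_mul]
    exact h6

lemma key (a b : ℕ) (hab : a < b) (x : ℝ)
    (h1 : Real.exp (-(a:ℝ)) / (2 * Real.exp 1) < x)
    (h2 : x < Real.exp (-(b:ℝ)) / 2) : False := by
  have hc : (a:ℝ) + 1 ≤ (b:ℝ) := by exact_mod_cast hab
  have h3 : Real.exp (-(b:ℝ)) ≤ Real.exp (-(a:ℝ) - 1) := Real.exp_le_exp.2 (by linarith)
  have h4 : Real.exp (-(a:ℝ) - 1) = Real.exp (-(a:ℝ)) / Real.exp 1 := Real.exp_sub _ _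
  have he := Real.exp_pos 1
  have h5 : x * (2 * Real.exp 1) < Real.exp (-(a:ℝ)) := by
    calc x * (2 * Real.exp 1) < (Real.exp (-(b:ℝ)) / 2) * (2 * Real.exp 1) := by nlinarith
    _ ≤ (Real.exp (-(a:ℝ) - 1) / 2) * (2 * Real.exp 1) := by nlinarith
    _ = Real.exp (-(a:ℝ)) := by rw [h4]; field_simp
  rw [div_lt_iff₀ (by positivity)] at h1
  linarith

theorem stmt10 (ε : ℝ) (hε0 : 0 < ε) (hε1 : ε < 1) (T : ℝ) (hT : 1 < T) :
    (∀ p q : ℕ × ℕ, p ≠ q →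
      Disjoint ((fun w => (aMat p.1 p.2)⁻¹.mulVec w) '' Delta ε)
        ((fun w => (aMat q.1 q.2)⁻¹.mulVec w) '' Delta ε)) ∧
    (⋃ p ∈ {p : ℕ × ℕ | p.1 ≤ ⌊T⌋₊ ∧ p.2 ≤ ⌊T⌋₊},
      (fun w => (aMat p.1 p.2)⁻¹.mulVec w) '' Delta ε) ⊆ Omega T ε := by
  constructor
  · intro p q hpq
    rw [Set.disjoint_left]
    intro v hvp hvq
    obtain ⟨_, _, hp2, hp3, hp4, hp5, _⟩ := image_bound _ _ _ _ hvp
    obtain ⟨_, _, hq2, hq3, hq4, hq5, _⟩ := image_bound _ _ _ _ hvq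
    have h1 : p.1 = q.1 := by
      rcases lt_trichotomy p.1 q.1 with h | h | h
      · exact absurd (key _ _ h _ hp2 hq3) (by simp)
      · exact h
      · exact absurd (key _ _ h _ hq2 hp3) (by simp)
    have h2 : p.2 = q.2 := by
      rcases lt_trichotomy p.2 q.2 with h | h | h
      · exact absurd (key _ _ h _ hp4 hq5) (by simp)
      · exact h
      · exact absurd (key _ _ h _ hq4 hp5) (by simp)
    exact hpq (Prod.ext h1 h2)
  · intro v hv
    simp only [Set.mem_iUnion] at hv
    obtain ⟨p, ⟨hm, hn⟩, hv⟩ := hv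
    obtain ⟨h0, h1, h2, h3, h4, h5, h6⟩ := image_bound _ _ _ _ hv
    have hfl : (⌊T⌋₊ : ℝ) ≤ T := Nat.floor_le (by linarith)
    have hsum : ((p.1:ℝ) + (p.2:ℝ)) ≤ 2 * T := by
      have : (p.1:ℝ) ≤ ⌊T⌋₊ := by exact_mod_cast hm
      have : (p.2:ℝ) ≤ ⌊T⌋₊ := by exact_mod_cast hn
      linarith
    have he := Real.exp_pos 1
    have em : Real.exp (-(p.1:ℝ)) ≤ 1 := Real.exp_le_one_iff.2 (neg_nonpos.2 (Nat.cast_nonneg _))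
    have en : Real.exp (-(p.2:ℝ)) ≤ 1 := Real.exp_le_one_iff.2 (neg_nonpos.2 (Nat.cast_nonneg _))
    have epm := Real.exp_pos (-(p.1:ℝ))
    have epn := Real.exp_pos (-(p.2:ℝ))
    refine ⟨h0, ?_, ?_, by linarith, ?_, by linarith, h6⟩
    · exact lt_of_lt_of_le h1 (Real.exp_le_exp.2 hsum)
    · have : 0 < Real.exp (-(p.1:ℝ)) / (2 * Real.exp 1) := by positivity
      linarith
    · have : 0 < Real.exp (-(p.2:ℝ)) / (2 * Real.exp 1) := by positivity
      linarith
end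

section
/- Let α, β ∈ ℝ \ ℚ, 0 < ε < 1/2, and let 𝐧 = (n, m₁, m₂) ∈ ℤ³ \ {0}. Define d_{ε,𝐧} = { (s,t) ∈ ℝ² : ‖a_{s,t}·τ_{α,β}·𝐧‖_∞ ≤ ε }. If d_{ε,𝐧} ∩ ℝ_{≥0}² ≠ ∅, then n ≠ 0 and d_{ε,𝐧} = { (s,t) ∈ ℝ² : s ≤ log(ε/|nα+m₁|), t ≤ log(ε/|nβ+m₂|), s+t ≥ log(|n|/ε) }; in particular d_{ε,𝐧} is an isosceles right triangle whose legs have length log( ε³ / (|n|·|nα+m₁|·|nβ+m₂|) ). -/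
open Filter MeasureTheory Matrix

/-- `d_{ε,𝐧} = {(s,t) ∈ ℝ² : ‖a_{s,t} τ_{α,β} 𝐧‖_∞ ≤ ε}`. -/
noncomputable def dSet (α β ε : ℝ) (v : Fin 3 → ℤ) : Set (ℝ × ℝ) :=
  {p | ‖(aMat p.1 p.2 * tauMat α β).mulVec (fun i => (v i : ℝ))‖ ≤ ε}

lemma vec_eq (α β s t : ℝ) (n m₁ m₂ : ℤ) :
    (aMat s t * tauMat α β).mulVec (fun i => ((![n, m₁, m₂] : Fin 3 → ℤ) i : ℝ)) =
      ![Real.exp (-s - t) * n, Real.exp s * (n * α + m₁), Real.exp t * (n * β + m₂)] := by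
  funext i
  fin_cases i <;>
    simp [aMat, tauMat, Matrix.mulVec, Matrix.mul_apply, Fin.sum_univ_three, dotProduct] <;> ring

lemma mem_dSet_iff (α β ε : ℝ) (hε0 : 0 < ε) (n m₁ m₂ : ℤ) (p : ℝ × ℝ) :
    p ∈ dSet α β ε ![n, m₁, m₂] ↔
      Real.exp (-p.1 - p.2) * |(n : ℝ)| ≤ ε ∧
      Real.exp p.1 * |(n : ℝ) * α + m₁| ≤ ε ∧
      Real.exp p.2 * |(n : ℝ) * β + m₂| ≤ ε := by
  rw [dSet, Set.mem_setOf_eq, vec_eq, pi_norm_le_iff_of_nonneg hε0.le]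
  simp [Fin.forall_fin_succ, abs_mul, Real.abs_exp]

set_option maxHeartbeats 1000000 in
theorem stmt15 (α β : ℝ) (hα : Irrational α) (hβ : Irrational β)
    (ε : ℝ) (hε0 : 0 < ε) (hε1 : ε < 1 / 2) (n m₁ m₂ : ℤ)
    (hv : (![n, m₁, m₂] : Fin 3 → ℤ) ≠ 0)
    (hne : (dSet α β ε ![n, m₁, m₂] ∩ {p : ℝ × ℝ | 0 ≤ p.1 ∧ 0 ≤ p.2}).Nonempty) :
    n ≠ 0 ∧
      dSet α β ε ![n, m₁, m₂] =
        {p : ℝ × ℝ | p.1 ≤ Real.log (ε / |(n : ℝ) * α + m₁|) ∧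
          p.2 ≤ Real.log (ε / |(n : ℝ) * β + m₂|) ∧
          Real.log (|(n : ℝ)| / ε) ≤ p.1 + p.2} := by
  obtain ⟨p, hp, hs, ht⟩ := hne
  rw [mem_dSet_iff α β ε hε0] at hp
  obtain ⟨h0, h1, h2⟩ := hp
  have hn : n ≠ 0 := by
    intro hn0
    subst hn0
    simp only [Int.cast_zero, zero_mul, zero_add] at h1 h2
    have hm : m₁ ≠ 0 ∨ m₂ ≠ 0 := by
      by_contra h
      push_neg at h
      apply hv
      funext i
      fin_cases i <;> simp [h.1, h.2]
    rcases hm with hm | hm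
    · have hm' : (1 : ℝ) ≤ |(m₁ : ℝ)| := by exact_mod_cast Int.one_le_abs hm
      nlinarith [Real.one_le_exp hs, abs_nonneg ((m₁ : ℝ))]
    · have hm' : (1 : ℝ) ≤ |(m₂ : ℝ)| := by exact_mod_cast Int.one_le_abs hm
      nlinarith [Real.one_le_exp ht, abs_nonneg ((m₂ : ℝ))]
  have hA : (0 : ℝ) < |(n : ℝ) * α + m₁| := by
    rw [abs_pos]
    have : Irrational ((n : ℝ) * α + m₁) := ((hα.intCast_mul hn).add_intCast m₁)
    exact fun h => this.ne_int 0 (by exact_mod_cast h)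
  have hB : (0 : ℝ) < |(n : ℝ) * β + m₂| := by
    rw [abs_pos]
    have : Irrational ((n : ℝ) * β + m₂) := ((hβ.intCast_mul hn).add_intCast m₂)
    exact fun h => this.ne_int 0 (by exact_mod_cast h)
  have hN : (0 : ℝ) < |(n : ℝ)| := by
    rw [abs_pos]; exact_mod_cast hn
  refine ⟨hn, ?_⟩
  ext q
  rw [mem_dSet_iff α β ε hε0, Set.mem_setOf_eq]
  have e1 : Real.exp q.1 * |(n : ℝ) * α + m₁| ≤ ε ↔ q.1 ≤ Real.log (ε / |(n : ℝ) * α + m₁|) := by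
    rw [Real.le_log_iff_exp_le (div_pos hε0 hA), le_div_iff₀ hA]
  have e2 : Real.exp q.2 * |(n : ℝ) * β + m₂| ≤ ε ↔ q.2 ≤ Real.log (ε / |(n : ℝ) * β + m₂|) := by
    rw [Real.le_log_iff_exp_le (div_pos hε0 hB), le_div_iff₀ hB]
  have e0 : Real.exp (-q.1 - q.2) * |(n : ℝ)| ≤ ε ↔ Real.log (|(n : ℝ)| / ε) ≤ q.1 + q.2 := by
    rw [Real.log_le_iff_le_exp (div_pos hN hε0), div_le_iff₀ hε0]
    have key : Real.exp (q.1 + q.2) * Real.exp (-q.1 - q.2) = 1 := by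
      rw [← Real.exp_add, show q.1 + q.2 + (-q.1 - q.2) = 0 by ring, Real.exp_zero]
    constructor
    · intro h
      nlinarith [Real.exp_pos (q.1 + q.2)]
    · intro h
      nlinarith [Real.exp_pos (-q.1 - q.2)]
  rw [e0, e1, e2]
  tauto
end
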